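/- In the erasure game where neither player knows the state, the value of the game to Player A is 1/2: Player A must play action e, and min over q ∈ [0,1] of (q·0 + (1−q)·1 averaged over S) cannot exceed 1/2, which is attained. -/

import Mathlib

/-- Player A's actions in the erasure game: 0, e (erasure), 1. -/
inductive ActA | a0 | ae | a1
deriving DecidableEq

instance : Fintype ActA where
  elems := {ActA.a0, ActA.ae, ActA.a1}
  complete := by intro x; cases x <;> simp

/-- Payoff to Player A in the erasure game with penalty `M`, where the state
`s : Bool` (false = 0, true = 1) and Player B's action `b : Bool`. -/
noncomputable def payoff (M : ℝ) (a : ActA) (b s : Bool) : ℝ :=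
  match a with
  | .a0 => if s then -M else (if b then 0 else 3)
  | .a1 => if s then (if b then 3 else 0) else -M
  | .ae => if b = s then 0 else 1

/-- `p` is a probability distribution on a finite set. -/
def IsDist {α : Type*} [Fintype α] (p : α → ℝ) : Prop :=
  (∀ x, 0 ≤ p x) ∧ ∑ x, p x = 1

/-- Expected payoff when neither player knows the uniform state. -/
noncomputable def expPay (M : ℝ) (pa : ActA → ℝ) (pb : Bool → ℝ) : ℝ :=
  (1/2) * ∑ s : Bool, ∑ a : ActA, ∑ b : Bool, pa a * pb b * payoff M a b s

lemma sumActA (f : ActA → ℝ) : ∑ a, f a = f .a0 + f .ae + f .a1 := by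
  show ∑ a ∈ (Finset.univ : Finset ActA), f a = _
  rw [show (Finset.univ : Finset ActA) = {.a0, .ae, .a1} by rfl]
  simp [Finset.sum_insert, Finset.mem_insert]
  ring

/-- If neither player knows the state, the max-min value of the erasure game is 1/2
(for all sufficiently large penalty M). -/
theorem stmt3 : ∃ M0 : ℝ, ∀ M ≥ M0,
    (∃ pa : ActA → ℝ, IsDist pa ∧
      ∀ pb : Bool → ℝ, IsDist pb → expPay M pa pb ≥ 1/2) ∧
    (∀ pa : ActA → ℝ, IsDist pa →
      ∃ pb : Bool → ℝ, IsDist pb ∧ expPay M pa pb ≤ 1/2) := by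
  refine ⟨2, fun M hM => ⟨?_, ?_⟩⟩
  · refine ⟨fun a => if a = .ae then 1 else 0, ⟨fun x => by positivity, by
      rw [sumActA]; simp⟩, fun pb hpb => ?_⟩
    have hsum : pb false + pb true = 1 := by
      have := hpb.2; rwa [Fintype.sum_bool, add_comm] at this
    have : expPay M (fun a => if a = .ae then 1 else 0) pb
        = (1/2) * (pb true + pb false) := by
      simp [expPay, payoff, Fintype.sum_bool, sumActA]
      ring
    rw [this]; linarith
  · intro pa hpa
    have h0 := hpa.1 .a0
    have he := hpa.1 .ae
    have h1 := hpa.1 .a1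
    have hs : pa .a0 + pa .ae + pa .a1 = 1 := by rw [← sumActA]; exact hpa.2
    have eF : expPay M pa (fun b => if b then 0 else 1)
        = (pa .a0 * (3 - M) + pa .ae - pa .a1 * M) / 2 := by
      simp [expPay, payoff, Fintype.sum_bool, sumActA]
      ring
    have eT : expPay M pa (fun b => if b then 1 else 0)
        = (pa .ae + pa .a1 * (3 - M) - pa .a0 * M) / 2 := by
      simp [expPay, payoff, Fintype.sum_bool, sumActA]
      ring
    have key : (pa .a0 + pa .a1) * (3 - 2*M) ≤ 0 := by nlinarith
    rcases le_or_gt (expPay M pa (fun b => if b then 0 else 1)) (1/2) with h | h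
    · exact ⟨fun b => if b then 0 else 1,
        ⟨fun x => by positivity, by rw [Fintype.sum_bool]; norm_num⟩, h⟩
    · refine ⟨fun b => if b then 1 else 0,
        ⟨fun x => by positivity, by rw [Fintype.sum_bool]; norm_num⟩, ?_⟩
      rw [eT]; rw [eF] at h; linarith
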